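/- Let k be a separably closed field of characteristic p, V a finite-dimensional k-vector space, and F : V → V an additive map satisfying F(cv) = c^p F(v) for c ∈ k, v ∈ V. Then the map F − 1 : V → V (i.e., v ↦ F(v) − v) is surjective. -/

import Mathlib

open Polynomial Finset Function

noncomputable def auxq (p : ℕ) {k : Type*} [Field k] (c : ℕ → k) : ℕ → k[X]
  | 0 => C (c 0) * X ^ p - 1
  | (i+1) => (auxq p c i) ^ p + C (c (i+1)) * X ^ p

lemma auxq_deriv (p : ℕ) {k : Type*} [Field k] [CharP k p] (c : ℕ → k) :
    ∀ i, derivative (auxq p c i) = 0 := by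
  intro i
  induction i with
  | zero => simp [auxq, derivative_X_pow, CharP.cast_eq_zero k p]
  | succ i ih => simp [auxq, derivative_pow, derivative_X_pow, ih, CharP.cast_eq_zero k p]

theorem stmt10 (p : ℕ) [Fact p.Prime] (k V : Type*) [Field k] [IsSepClosed k] [CharP k p]
    [AddCommGroup V] [Module k V] [FiniteDimensional k V]
    (F : V → V)
    (hFadd : ∀ x y, F (x + y) = F x + F y)
    (hFsemi : ∀ (c : k) (v : V), F (c • v) = c ^ p • F v) :
    Function.Surjective (fun v : V => F v - v) := by
  intro w
  have hF0 : F 0 = 0 := by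
    have h := hFadd 0 0
    rw [add_zero] at h
    exact left_eq_add.mp h
  by_cases hw : w = 0
  · exact ⟨0, by simp [hF0, hw]⟩
  classical
  -- Step 1: a dependence relation among the iterates F^[i] w
  set d := Module.finrank k V with hd
  have hdep : ¬ LinearIndependent k (fun i : Fin (d+1) => F^[(i : ℕ)] w) := by
    intro h
    have := h.fintype_card_le_finrank
    simp [hd] at this
  obtain ⟨g, hg0, hgne⟩ := Fintype.not_linearIndependent_iff.mp hdep
  set s : Finset (Fin (d+1)) := Finset.univ.filter (fun i => g i ≠ 0) with hs
  have hsne : s.Nonempty := by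
    obtain ⟨i, hi⟩ := hgne
    exact ⟨i, by simp [hs, hi]⟩
  set nmax : Fin (d+1) := s.max' hsne with hnmax
  have hgn : g nmax ≠ 0 := by
    have := s.max'_mem hsne
    simpa [hs] using this
  set N : ℕ := (nmax : ℕ) with hN
  set g' : ℕ → k := fun i => if h : i < d + 1 then g ⟨i, h⟩ else 0 with hg'
  have hg'N : g' N = g nmax := by
    simp only [hg']
    exact dif_pos nmax.isLt
  have hg'zero : ∀ i, N < i → g' i = 0 := by
    intro i hi
    by_cases h : i < d + 1
    · simp only [hg', dif_pos h]
      by_contra hne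
      have hmem : (⟨i, h⟩ : Fin (d+1)) ∈ s := by simp [hs, hne]
      have hle := s.le_max' _ hmem
      rw [← hnmax] at hle
      have : i ≤ N := hle
      omega
    · simp only [hg', dif_neg h]
  have hsum0 : ∑ i ∈ Finset.range (d+1), g' i • F^[i] w = 0 := by
    rw [Finset.sum_range (fun i => g' i • F^[i] w), ← hg0]
    refine Finset.sum_congr rfl fun i _ => ?_
    congr 1
    simp [hg']
    exact fun h => absurd i.isLt (by omega)
  have hN1 : 1 ≤ N := by
    by_contra hcon
    have hN0 : N = 0 := by omega
    have hsingle : ∑ i ∈ Finset.range (d+1), g' i • F^[i] w = g' 0 • F^[0] w := by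
      apply Finset.sum_eq_single 0
      · intro i _ hne
        rw [hg'zero i (by omega), zero_smul]
      · intro hh
        exact absurd (Finset.mem_range.mpr (by omega)) hh
    rw [hsum0] at hsingle
    have h0ne : g' 0 ≠ 0 := by rw [← hN0, hg'N]; exact hgn
    have : F^[0] w = 0 := by
      rcases smul_eq_zero.mp hsingle.symm with h | h
      · exact absurd h h0ne
      · exact h
    simp only [Function.iterate_zero_apply] at this
    exact hw this
  obtain ⟨M, hM⟩ : ∃ M, N = M + 1 := ⟨N - 1, by omega⟩
  set c : ℕ → k := fun i => -(g' i) / g' N with hc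
  have hNne : g' N ≠ 0 := by rw [hg'N]; exact hgn
  have hrel : F^[M+1] w = ∑ i ∈ Finset.range (M+1), c i • F^[i] w := by
    have hsub : (∑ i ∈ Finset.range N, g' i • F^[i] w) + g' N • F^[N] w = 0 := by
      rw [← Finset.sum_range_succ, ← hsum0]
      apply Finset.sum_subset
      · intro i hi
        simp only [Finset.mem_range] at *
        have : N < d + 1 := nmax.isLt
        omega
      · intro i hi hni
        simp only [Finset.mem_range] at hi hni
        rw [hg'zero i (by omega), zero_smul]
    rw [← hM]
    calc F^[N] w = (g' N)⁻¹ • (g' N • F^[N] w) := (inv_smul_smul₀ hNne _).symm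
      _ = (g' N)⁻¹ • (-(∑ i ∈ Finset.range N, g' i • F^[i] w)) := by
            rw [← eq_neg_of_add_eq_zero_right hsub]
      _ = ∑ i ∈ Finset.range N, c i • F^[i] w := by
            rw [← Finset.sum_neg_distrib, Finset.smul_sum]
            refine Finset.sum_congr rfl fun i _ => ?_
            rw [← neg_smul, smul_smul, hc]
            congr 1
            field_simp
  -- Step 2: the separable polynomial and its root
  have hQd : derivative (auxq p c M - X) = -1 := by
    rw [derivative_sub, auxq_deriv, derivative_X, zero_sub]
  have hQdeg : (auxq p c M - X).degree ≠ 0 := by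
    intro h
    have hC := Polynomial.eq_C_of_degree_le_zero h.le
    rw [hC] at hQd
    simp only [derivative_C] at hQd
    exact one_ne_zero (neg_eq_zero.mp hQd.symm)
  have hQsep : (auxq p c M - X).Separable := ⟨0, -1, by rw [hQd]; ring⟩
  obtain ⟨t, ht⟩ := IsSepClosed.exists_root _ hQdeg hQsep
  have htroot : (auxq p c M).eval t = t := by
    have h := ht
    simp only [Polynomial.IsRoot, eval_sub, eval_X] at h
    exact sub_eq_zero.mp h
  set x : ℕ → k := fun i => (auxq p c i).eval t with hx
  have hx0 : x 0 = c 0 * t ^ p - 1 := by simp [hx, auxq]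
  have hxs : ∀ i, x (i+1) = (x i)^p + c (i+1) * t ^ p := by
    intro i; simp [hx, auxq]
  have hxM : x M = t := htroot
  -- Step 3: the solution and verification
  refine ⟨∑ i ∈ Finset.range (M+1), x i • F^[i] w, ?_⟩
  have hFsum : ∀ (n : ℕ) (a : ℕ → k), F (∑ i ∈ Finset.range n, a i • F^[i] w)
      = ∑ i ∈ Finset.range n, (a i)^p • F^[i+1] w := by
    intro n a
    induction n with
    | zero => simpa using hF0
    | succ n ih =>
        rw [Finset.sum_range_succ, hFadd, ih, hFsemi, Finset.sum_range_succ,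
          Function.iterate_succ_apply']
  show F (∑ i ∈ Finset.range (M+1), x i • F^[i] w) - (∑ i ∈ Finset.range (M+1), x i • F^[i] w) = w
  rw [hFsum, Finset.sum_range_succ (fun i => (x i)^p • F^[i+1] w), hxM, hrel, Finset.smul_sum,
    Finset.sum_range_succ' (fun i => t^p • (c i • F^[i] w)) M,
    Finset.sum_range_succ' (fun i => x i • F^[i] w) M]
  have hterm : ∀ i, (x i)^p • F^[i+1] w + t^p • (c (i+1) • F^[i+1] w) - x (i+1) • F^[i+1] w = 0 := by
    intro i
    have hz : (x i)^p + t^p * c (i+1) - ((x i)^p + c (i+1) * t^p) = 0 := by ring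
    rw [smul_smul, ← add_smul, ← sub_smul, hxs, hz, zero_smul]
  have expand : (∑ i ∈ Finset.range M, (x i)^p • F^[i+1] w)
        + ((∑ i ∈ Finset.range M, t^p • (c (i+1) • F^[i+1] w)) + t^p • (c 0 • F^[0] w))
        - ((∑ i ∈ Finset.range M, x (i+1) • F^[i+1] w) + x 0 • F^[0] w)
      = (∑ i ∈ Finset.range M, ((x i)^p • F^[i+1] w + t^p • (c (i+1) • F^[i+1] w)
          - x (i+1) • F^[i+1] w)) + (t^p • (c 0 • F^[0] w) - x 0 • F^[0] w) := by
    rw [Finset.sum_sub_distrib, Finset.sum_add_distrib]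
    abel
  rw [expand, Finset.sum_eq_zero (fun i _ => hterm i), zero_add, smul_smul, ← sub_smul, hx0,
    show t^p * c 0 - (c 0 * t ^ p - 1) = 1 by ring, one_smul, Function.iterate_zero_apply]
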